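/- Let n ≥ 1, 1 < p < ∞, α > 0. Let A be a bounded operator on F_α^p and let (z_γ) be a net in ℂⁿ such that A_{z_γ} := C̃_{z_γ} A C̃_{−z_γ} converges strongly to a bounded operator L on F_α^p and such that C̃_{z_γ} K C̃_{−z_γ} converges strongly to 0 for every compact operator K on F_α^p. Then ‖L‖ ≤ ‖A + K‖ for every compact operator K on F_α^p; in particular ‖L‖ is at most the essential norm inf{‖A + K‖ : K compact} of A. -/

import Mathlib

open MeasureTheory Complex Filter Metric

noncomputable section

set_option synthInstance.maxHeartbeats 1000000
set_option maxHeartbeats 1000000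

/-- ℂⁿ with its Euclidean (Hermitian) norm. -/
abbrev Cn (n : ℕ) := EuclideanSpace ℂ (Fin n)

instance (n : ℕ) : MeasurableSpace (Cn n) :=
  MeasurableSpace.comap (WithLp.ofLp : Cn n → (Fin n → ℂ)) MeasurableSpace.pi
instance (n : ℕ) : MeasureSpace (Cn n) :=
  ⟨(Measure.pi fun _ => (volume : Measure ℂ)).map (WithLp.toLp 2 : (Fin n → ℂ) → Cn n)⟩

/-- The standard Hermitian inner product ⟨z,w⟩ on ℂⁿ, linear in the first argument and
antilinear in the second. -/
def herm {n : ℕ} (z w : Cn n) : ℂ := inner ℂ w z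

/-- The Gaussian measure dμ_ν(z) = (ν/π)ⁿ e^{−ν|z|²} dz on ℂⁿ. -/
def gaussMeasure (n : ℕ) (ν : ℝ) : Measure (Cn n) :=
  volume.withDensity fun z => ENNReal.ofReal ((ν / Real.pi) ^ n * Real.exp (-ν * ‖z‖ ^ 2))

/-- L_α^p = L^p(ℂⁿ, μ_{pα/2}). -/
abbrev Lpa (n : ℕ) (p α : ℝ) := Lp ℂ (ENNReal.ofReal p) (gaussMeasure n (p * α / 2))

/-- The Fock space F_α^p : the subspace of L_α^p consisting of (classes of) entire functions. -/
def FockS (n : ℕ) (p α : ℝ) [Fact (1 ≤ ENNReal.ofReal p)] : Submodule ℂ (Lpa n p α) where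
  carrier := {f | ∃ g : Cn n → ℂ, Differentiable ℂ g ∧ ⇑f =ᵐ[gaussMeasure n (p * α / 2)] g}
  add_mem' := by
    rintro f₁ f₂ ⟨g₁, hg₁, he₁⟩ ⟨g₂, hg₂, he₂⟩
    exact ⟨g₁ + g₂, hg₁.add hg₂, (Lp.coeFn_add f₁ f₂).trans (he₁.add he₂)⟩
  zero_mem' := ⟨0, differentiable_const 0, Lp.coeFn_zero _ _ _⟩
  smul_mem' := by
    rintro c f ⟨g, hg, he⟩
    exact ⟨c • g, hg.const_smul c, (Lp.coeFn_smul c f).trans (he.const_smul c)⟩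

/-- `C` is the weighted shift operator C̃_z on the Fock space F_α^p :
(C̃_z f)(w) = f(w−z) e^{α⟨w,z⟩ − (α/2)|z|²}. -/
def IsShiftOpF (n : ℕ) (p α : ℝ) [Fact (1 ≤ ENNReal.ofReal p)] (z : Cn n)
    (C : ↥(FockS n p α) →L[ℂ] ↥(FockS n p α)) : Prop :=
  ∀ f : ↥(FockS n p α),
    ((C f : Lpa n p α) : Cn n → ℂ) =ᵐ[gaussMeasure n (p * α / 2)]
      fun w => Complex.exp ((α : ℂ) * herm w z - ((α / 2 * ‖z‖ ^ 2 : ℝ) : ℂ))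
        * (f : Lpa n p α) (w - z)

lemma cnMeasurableAdd (n : ℕ) : MeasurableAdd (Cn n) :=
  inferInstance
lemma cnAddRightInvariant (n : ℕ) : Measure.IsAddRightInvariant (volume : Measure (Cn n)) :=
  by
    refine ⟨fun g => ?_⟩
    show Measure.map (· + g) ((Measure.pi fun _ => (volume : Measure ℂ)).map (WithLp.toLp 2)) = _
    rw [Measure.map_map (measurable_add_const g) (WithLp.measurable_toLp _ _)]
    have hc : (fun x : Cn n => x + g) ∘ (WithLp.toLp 2 : (Fin n → ℂ) → Cn n)
        = (WithLp.toLp 2) ∘ (fun x => x + WithLp.ofLp g) := by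
      funext x; rfl
    rw [hc, ← Measure.map_map (WithLp.measurable_toLp _ _) (measurable_add_const _),
      map_add_right_eq_self]
    rfl

lemma lint_key {n : ℕ} {p α : ℝ} (hp : 1 < p) (hα : 0 < α)
    (z : Cn n) (F : Cn n → ℂ) :
    ∫⁻ w, (‖Complex.exp ((α : ℂ) * herm w z - ((α / 2 * ‖z‖ ^ 2 : ℝ) : ℂ)) * F (w - z)‖₊ : ENNReal) ^ p
        ∂ gaussMeasure n (p * α / 2)
      = ∫⁻ w, (‖F w‖₊ : ENNReal) ^ p ∂ gaussMeasure n (p * α / 2) := by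
  have hp0 : (0:ℝ) < p := one_pos.trans hp
  haveI := cnMeasurableAdd n
  haveI := cnAddRightInvariant n
  have hν0 : 0 < p * α / 2 := by positivity
  set ν : ℝ := p * α / 2 with hν
  have hρm : Measurable fun w : Cn n =>
      ENNReal.ofReal ((ν / Real.pi) ^ n * Real.exp (-ν * ‖w‖ ^ 2)) := by
    haveI : BorelSpace (Cn n) := inferInstance
    apply Measurable.ennreal_ofReal
    exact (continuous_const.mul (Real.continuous_exp.comp (by continuity))).measurable
  have hρfin : ∀ᵐ w ∂(volume : Measure (Cn n)),
      ENNReal.ofReal ((ν / Real.pi) ^ n * Real.exp (-ν * ‖w‖ ^ 2)) < ⊤ :=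
    ae_of_all _ fun w => ENNReal.ofReal_lt_top
  unfold gaussMeasure
  rw [lintegral_withDensity_eq_lintegral_mul_non_measurable _ hρm hρfin,
      lintegral_withDensity_eq_lintegral_mul_non_measurable _ hρm hρfin,
      ← lintegral_sub_right_eq_self
        (fun w : Cn n => ((fun w : Cn n => ENNReal.ofReal ((ν / Real.pi) ^ n * Real.exp (-ν * ‖w‖ ^ 2)))
          * fun w => (‖F w‖₊ : ENNReal) ^ p) w) z]
  refine lintegral_congr fun w => ?_
  simp only [Pi.mul_apply]
  have hre : ((α : ℂ) * herm w z - ((α / 2 * ‖z‖ ^ 2 : ℝ) : ℂ)).re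
      = α * (herm w z).re - α / 2 * ‖z‖ ^ 2 := by
    rw [Complex.sub_re, Complex.ofReal_re, Complex.re_ofReal_mul]
  have hnorm : ‖Complex.exp ((α : ℂ) * herm w z - ((α / 2 * ‖z‖ ^ 2 : ℝ) : ℂ)) * F (w - z)‖
      = Real.exp (α * (herm w z).re - α / 2 * ‖z‖ ^ 2) * ‖F (w - z)‖ := by
    rw [norm_mul, Complex.norm_exp, hre]
  have h1 : (‖Complex.exp ((α : ℂ) * herm w z - ((α / 2 * ‖z‖ ^ 2 : ℝ) : ℂ)) * F (w - z)‖₊ : ENNReal) ^ p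
      = ENNReal.ofReal ((Real.exp (α * (herm w z).re - α / 2 * ‖z‖ ^ 2) * ‖F (w - z)‖) ^ p) := by
    rw [← enorm_eq_nnnorm, ← ofReal_norm, hnorm, ENNReal.ofReal_rpow_of_nonneg (by positivity) hp0.le]
  have h2 : (‖F (w - z)‖₊ : ENNReal) ^ p = ENNReal.ofReal (‖F (w - z)‖ ^ p) := by
    rw [← enorm_eq_nnnorm, ← ofReal_norm, ENNReal.ofReal_rpow_of_nonneg (norm_nonneg _) hp0.le]
  rw [h1, h2, ← ENNReal.ofReal_mul (by positivity), ← ENNReal.ofReal_mul (by positivity)]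
  congr 1
  have hexpand : ‖w - z‖ ^ 2 = ‖w‖ ^ 2 - 2 * (herm w z).re + ‖z‖ ^ 2 := by
    have h := @norm_sub_sq ℂ (Cn n) _ _ _ w z
    rw [inner_re_symm] at h
    simpa only [herm, RCLike.re_to_complex] using h
  have hmul : (Real.exp (α * (herm w z).re - α / 2 * ‖z‖ ^ 2) * ‖F (w - z)‖) ^ p
      = Real.exp ((α * (herm w z).re - α / 2 * ‖z‖ ^ 2) * p) * ‖F (w - z)‖ ^ p := by
    rw [Real.mul_rpow (Real.exp_pos _).le (norm_nonneg _), ← Real.exp_mul]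
  have hexp : Real.exp (-ν * ‖w‖ ^ 2) * Real.exp ((α * (herm w z).re - α / 2 * ‖z‖ ^ 2) * p)
      = Real.exp (-ν * ‖w - z‖ ^ 2) := by
    rw [← Real.exp_add]
    congr 1
    rw [hexpand, hν]
    ring
  calc (ν / Real.pi) ^ n * Real.exp (-ν * ‖w‖ ^ 2) *
        ((Real.exp (α * (herm w z).re - α / 2 * ‖z‖ ^ 2) * ‖F (w - z)‖) ^ p)
      = (ν / Real.pi) ^ n * (Real.exp (-ν * ‖w‖ ^ 2) *
          Real.exp ((α * (herm w z).re - α / 2 * ‖z‖ ^ 2) * p)) * ‖F (w - z)‖ ^ p := by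
        rw [hmul]; ring
    _ = (ν / Real.pi) ^ n * Real.exp (-ν * ‖w - z‖ ^ 2) * ‖F (w - z)‖ ^ p := by rw [hexp]

lemma shift_norm {n : ℕ} {p α : ℝ} (hp : 1 < p) (hα : 0 < α) [Fact (1 ≤ ENNReal.ofReal p)]
    {z : Cn n} {C : ↥(FockS n p α) →L[ℂ] ↥(FockS n p α)} (hC : IsShiftOpF n p α z C)
    (f : ↥(FockS n p α)) : ‖C f‖ = ‖f‖ := by
  have hp0 : (0:ℝ) < p := one_pos.trans hp
  have hq0 : ENNReal.ofReal p ≠ 0 := (ENNReal.ofReal_pos.mpr hp0).ne'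
  have hqt : ENNReal.ofReal p ≠ ⊤ := ENNReal.ofReal_ne_top
  have hc : ‖C f‖ = ‖((C f : ↥(FockS n p α)) : Lpa n p α)‖ := rfl
  have hc2 : ‖f‖ = ‖(f : Lpa n p α)‖ := rfl
  rw [hc, hc2, Lp.norm_def, Lp.norm_def, eLpNorm_congr_ae (hC f),
      eLpNorm_eq_lintegral_rpow_enorm_toReal hq0 hqt, eLpNorm_eq_lintegral_rpow_enorm_toReal hq0 hqt]
  simp only [ENNReal.toReal_ofReal hp0.le, enorm_eq_nnnorm]
  rw [lint_key hp hα z (⇑(f : Lpa n p α))]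

/-- If A_{z_γ} = C̃_{z_γ} A C̃_{−z_γ} → L strongly along a net (z_γ) and
C̃_{z_γ} K C̃_{−z_γ} → 0 strongly for every compact K, then ‖L‖ ≤ ‖A + K‖ for every compact
operator K; in particular ‖L‖ is at most the essential norm of A. -/
theorem statement17 (n : ℕ) (hn : 1 ≤ n) (p α : ℝ) (hp : 1 < p) (hα : 0 < α)
    [Fact (1 ≤ ENNReal.ofReal p)]
    {ι : Type*} [Nonempty ι] [SemilatticeSup ι] (z : ι → Cn n)
    (A : ↥(FockS n p α) →L[ℂ] ↥(FockS n p α))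
    (CT CTm : ι → ↥(FockS n p α) →L[ℂ] ↥(FockS n p α))
    (hCT : ∀ γ, IsShiftOpF n p α (z γ) (CT γ))
    (hCTm : ∀ γ, IsShiftOpF n p α (-(z γ)) (CTm γ))
    (L : ↥(FockS n p α) →L[ℂ] ↥(FockS n p α))
    (hconv : ∀ h : ↥(FockS n p α),
      Tendsto (fun γ => ((CT γ).comp (A.comp (CTm γ))) h) atTop (nhds (L h)))
    (hcpt : ∀ K : ↥(FockS n p α) →L[ℂ] ↥(FockS n p α), IsCompactOperator ⇑K →
      ∀ h : ↥(FockS n p α),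
        Tendsto (fun γ => ((CT γ).comp (K.comp (CTm γ))) h) atTop (nhds 0)) :
    ∀ K : ↥(FockS n p α) →L[ℂ] ↥(FockS n p α), IsCompactOperator ⇑K → ‖L‖ ≤ ‖A + K‖ := by
  intro K hK
  have hTle : ∀ γ (g : ↥(FockS n p α)), ‖(CT γ) g‖ = ‖g‖ := fun γ => shift_norm hp hα (hCT γ)
  have hTmle : ∀ γ (g : ↥(FockS n p α)), ‖(CTm γ) g‖ = ‖g‖ := fun γ => shift_norm hp hα (hCTm γ)
  refine ContinuousLinearMap.opNorm_le_bound L (norm_nonneg (A + K)) fun h => ?_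
  have htend : Tendsto (fun γ => (CT γ) ((A + K) ((CTm γ) h))) atTop (nhds (L h)) := by
    have h' := (hconv h).add (hcpt K hK h)
    simpa [ContinuousLinearMap.comp_apply, ContinuousLinearMap.add_apply, map_add] using h'
  refine le_of_tendsto' htend.norm fun γ => ?_
  calc ‖(CT γ) ((A + K) ((CTm γ) h))‖ = ‖(A + K) ((CTm γ) h)‖ := hTle γ _
    _ ≤ ‖A + K‖ * ‖(CTm γ) h‖ := ContinuousLinearMap.le_opNorm (A + K) _
    _ = ‖A + K‖ * ‖h‖ := by rw [hTmle γ h]
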